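/- For β > 1, m(β) satisfies β(1 − m(β)²) < 1; equivalently the derivative of x ↦ tanh(βx) at x = m(β) is strictly less than 1. -/

import Mathlib

open Real

lemma tanh_hasDerivAt (x : ℝ) : HasDerivAt Real.tanh (1 - Real.tanh x ^ 2) x := by
  have hc : Real.cosh x ≠ 0 := (Real.cosh_pos x).ne'
  have h := (Real.hasDerivAt_sinh x).div (Real.hasDerivAt_cosh x) hc
  have heq : (Real.cosh x * Real.cosh x - Real.sinh x * Real.sinh x) / Real.cosh x ^ 2
      = 1 - Real.tanh x ^ 2 := by
    rw [Real.tanh_eq_sinh_div_cosh]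
    have h1 := Real.cosh_sq_sub_sinh_sq x
    field_simp
  have h2 : (Real.sinh / Real.cosh) = Real.tanh := by
    funext y; rw [Pi.div_apply, Real.tanh_eq_sinh_div_cosh]
  rw [h2, heq] at h
  exact h

lemma tanh_lt_one' (x : ℝ) : Real.tanh x < 1 := by
  rw [Real.tanh_eq_sinh_div_cosh]
  exact div_lt_one (Real.cosh_pos x) |>.mpr (Real.sinh_lt_cosh x)

/-- `m β` is the largest solution of the Curie-Weiss equation `tanh (β * x) = x`. -/
noncomputable def cwM (β : ℝ) : ℝ := sSup {x : ℝ | Real.tanh (β * x) = x}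

theorem stmt_4 (β : ℝ) (hβ : 1 < β) :
    β * (1 - (cwM β) ^ 2) < 1 ∧
      deriv (fun x : ℝ => Real.tanh (β * x)) (cwM β) < 1 := by
  have hβ0 : 0 < β := by linarith
  set S : Set ℝ := {x : ℝ | Real.tanh (β * x) = x} with hS
  have htanh_cont : Continuous Real.tanh :=
    continuous_iff_continuousAt.mpr fun x => (tanh_hasDerivAt x).continuousAt
  have hfd : ∀ y : ℝ, HasDerivAt (fun x : ℝ => Real.tanh (β * x))
      ((1 - Real.tanh (β * y) ^ 2) * β) y := by
    intro y
    have := (tanh_hasDerivAt (β * y)).comp y ((hasDerivAt_id y).const_mul β)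
    rw [mul_one] at this
    exact this
  have hclosed : IsClosed S :=
    isClosed_eq (htanh_cont.comp (continuous_const.mul continuous_id)) continuous_id
  have hbdd : BddAbove S := ⟨1, fun x hx => by
    have : Real.tanh (β * x) = x := hx
    rw [← this]; exact (tanh_lt_one' _).le⟩
  -- find a point where g x > 0
  set g : ℝ → ℝ := fun x => Real.tanh (β * x) - x with hg
  have hg0 : HasDerivAt g (β - 1) 0 := by
    have h := (hfd 0).sub (hasDerivAt_id 0)
    have e : (1 - Real.tanh (β * 0) ^ 2) * β - 1 = β - 1 := by simp
    rw [e] at h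
    exact h
  have hslope := hasDerivAt_iff_tendsto_slope.mp hg0
  have hev : ∀ᶠ x in nhdsWithin (0:ℝ) {(0:ℝ)}ᶜ, 0 < slope g 0 x :=
    hslope.eventually (eventually_gt_nhds (by linarith))
  have hev2 : ∀ᶠ x in nhdsWithin (0:ℝ) (Set.Ioi 0), 0 < slope g 0 x :=
    hev.filter_mono (nhdsWithin_mono 0 (fun x hx => by
      simp only [Set.mem_compl_iff, Set.mem_singleton_iff]
      exact ne_of_gt hx))
  obtain ⟨x₀, hx₀slope, hx₀pos⟩ := (hev2.and eventually_mem_nhdsWithin).exists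
  have hx₀pos' : (0:ℝ) < x₀ := hx₀pos
  have hgx₀ : 0 < g x₀ := by
    have hs : slope g 0 x₀ = g x₀ / x₀ := by
      rw [slope_def_field]; simp [g, Real.tanh_zero]
    rw [hs] at hx₀slope
    have := mul_pos hx₀slope hx₀pos'
    rwa [div_mul_cancel₀ _ (ne_of_gt hx₀pos')] at this
  have hx₀lt1 : x₀ < 1 := by
    have : Real.tanh (β * x₀) < 1 := tanh_lt_one' _
    simp only [g] at hgx₀; linarith
  have hg1 : g 1 < 0 := by
    have : Real.tanh (β * 1) < 1 := tanh_lt_one' _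
    simp only [g]; linarith
  have hcont : ContinuousOn g (Set.Icc x₀ 1) :=
    ((htanh_cont.comp (continuous_const.mul continuous_id)).sub continuous_id).continuousOn
  have hivt := intermediate_value_Icc' hx₀lt1.le hcont
  have h0mem : (0:ℝ) ∈ Set.Icc (g 1) (g x₀) := ⟨hg1.le, hgx₀.le⟩
  obtain ⟨c, hcmem, hgc⟩ := hivt h0mem
  have hcS : c ∈ S := by
    have : Real.tanh (β * c) - c = 0 := hgc
    simpa [S] using by linarith [this]
  have hne : S.Nonempty := ⟨c, hcS⟩
  have hmem : cwM β ∈ S := hclosed.csSup_mem hne hbdd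
  set m := cwM β with hmdef
  have hm : Real.tanh (β * m) = m := hmem
  have hmpos : 0 < m :=
    lt_of_lt_of_le (lt_of_lt_of_le hx₀pos' hcmem.1) (le_csSup hbdd hcS)
  set t := β * m with htdef
  have htpos : 0 < t := mul_pos hβ0 hmpos
  have hcosh : 0 < Real.cosh t := Real.cosh_pos t
  have hsinh : 0 < Real.sinh t := Real.sinh_pos_iff.mpr htpos
  have hmc : m * Real.cosh t = Real.sinh t := by
    rw [← hm, Real.tanh_eq_sinh_div_cosh]
    field_simp
  have h1 : (1 - m ^ 2) * Real.cosh t ^ 2 = 1 := by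
    have h := Real.cosh_sq_sub_sinh_sq t
    nlinarith [hmc]
  have h2 : t < Real.sinh t * Real.cosh t := by
    have ht : t < Real.sinh t := Real.self_lt_sinh_iff.mpr htpos
    have := le_mul_of_one_le_right hsinh.le (Real.one_le_cosh t)
    linarith
  have h3 : β * Real.sinh t = t * Real.cosh t := by
    rw [← hmc, htdef]; ring
  have h5 : β * (1 - m ^ 2) * (Real.sinh t * Real.cosh t) * Real.cosh t = t * Real.cosh t := by
    linear_combination (β * Real.sinh t) * h1 + Real.cosh t * h3 + (β * Real.cosh t - β) * hmc
  have h6 : β * (1 - m ^ 2) * (Real.sinh t * Real.cosh t) = t :=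
    mul_right_cancel₀ hcosh.ne' h5
  have key : β * (1 - m ^ 2) < 1 := by
    have hsc : 0 < Real.sinh t * Real.cosh t := mul_pos hsinh hcosh
    have hlt : β * (1 - m ^ 2) * (Real.sinh t * Real.cosh t)
        < 1 * (Real.sinh t * Real.cosh t) := by rw [h6, one_mul]; exact h2
    exact lt_of_mul_lt_mul_right hlt hsc.le
  refine ⟨key, ?_⟩
  have hd := (hfd m).deriv
  rw [hd, hm]
  linarith [key]
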